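/- arXiv:2002.04325 — 7 statements merged into one kernel-verified Lean document; each statement's English description precedes it below -/
import Mathlib

section
/- Let F be a field, n ≥ 1, and T_n the ring of lower triangular n×n matrices over F. For A, B ∈ T_n, the cyclic submodule T_n(A,B) = {(RA, RB) : R ∈ T_n} of the free left module ²T_n is free (i.e., R ∈ T_n with RA = 0 and RB = 0 implies R = 0) if and only if the rank of the n×(2n) matrix [A|B] equals n. -/
/-- The subring `T_n` of lower triangular `n × n` matrices over a field `F`:
matrices `A` with `A i j = 0` whenever `i < j`. -/
def Tri (F : Type*) [Field F] (n : ℕ) : Subring (Matrix (Fin n) (Fin n) F) where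
  carrier := {A | ∀ i j : Fin n, i < j → A i j = 0}
  zero_mem' := fun i j _ => rfl
  one_mem' := fun i j hij => Matrix.one_apply_ne (ne_of_lt hij)
  add_mem' := fun {a b} ha hb i j hij => by
    simp [Matrix.add_apply, ha i j hij, hb i j hij]
  neg_mem' := fun {a} ha i j hij => by
    simp [Matrix.neg_apply, ha i j hij]
  mul_mem' := fun {a b} ha hb i j hij => by
    rw [Matrix.mul_apply]
    apply Finset.sum_eq_zero
    intro k _
    rcases lt_or_ge i k with h | h
    · rw [ha i k h, zero_mul]
    · rw [hb k j (lt_of_le_of_lt h hij), mul_zero]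

theorem rank_eq_iff_vecMul {F : Type*} [Field F] {n : ℕ} {m : Type*} [Fintype m]
    (M : Matrix (Fin n) m F) :
    M.rank = n ↔ ∀ v : Fin n → F, Matrix.vecMul v M = 0 → v = 0 := by
  have h1 : (∀ v : Fin n → F, Matrix.vecMul v M = 0 → v = 0) ↔
      Function.Injective M.vecMul := by
    rw [← Matrix.coe_vecMulLinear, ← LinearMap.ker_eq_bot, LinearMap.ker_eq_bot']
    simp [Matrix.vecMulLinear_apply]
  rw [h1, Matrix.vecMul_injective_iff]
  constructor
  · intro h
    rw [linearIndependent_iff_card_eq_finrank_span]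
    rw [Matrix.rank_eq_finrank_span_row] at h
    simp [Set.finrank, h]
  · intro h
    simpa using h.rank_matrix

/-- Let `F` be a field, `n ≥ 1`, and `T_n` the ring of lower triangular
`n × n` matrices over `F`.  For `A, B ∈ T_n`, the cyclic submodule
`T_n(A,B) = {(RA, RB) : R ∈ T_n}` of the free left module `²T_n` is free
(i.e. `R ∈ T_n` with `RA = 0` and `RB = 0` implies `R = 0`) if and only if the rank of the
`n × 2n` matrix `[A|B]` equals `n`. -/
theorem free_cyclic_iff_rank_eq_triangular
    {F : Type*} [Field F] {n : ℕ} (hn : 1 ≤ n) (A B : Tri F n) :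
    (∀ R : Tri F n, R * A = 0 → R * B = 0 → R = 0) ↔
      (Matrix.fromCols (A : Matrix (Fin n) (Fin n) F)
        (B : Matrix (Fin n) (Fin n) F)).rank = n := by
  rw [rank_eq_iff_vecMul]
  constructor
  · intro h v hv
    rw [Matrix.vecMul_fromCols] at hv
    have hvA : Matrix.vecMul v (A : Matrix (Fin n) (Fin n) F) = 0 := by
      ext j; exact congr_fun hv (Sum.inl j)
    have hvB : Matrix.vecMul v (B : Matrix (Fin n) (Fin n) F) = 0 := by
      ext j; exact congr_fun hv (Sum.inr j)
    -- build the lower triangular matrix whose last row is v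
    set last : Fin n := ⟨n - 1, by omega⟩ with hlast
    have hle : ∀ j : Fin n, j ≤ last := fun j => by
      simp only [hlast, Fin.le_def]; omega
    set M : Matrix (Fin n) (Fin n) F := fun i j => if i = last then v j else 0 with hM
    have hMtri : M ∈ Tri F n := by
      intro i j hij
      simp only [hM]
      rw [if_neg]
      rintro rfl
      exact absurd (hle j) (not_le.mpr hij)
    set R : Tri F n := ⟨M, hMtri⟩ with hR
    have hmul : ∀ C : Tri F n, Matrix.vecMul v (C : Matrix (Fin n) (Fin n) F) = 0 →
        R * C = 0 := by
      intro C hC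
      apply Subtype.ext
      show M * (C : Matrix (Fin n) (Fin n) F) = 0
      ext i j
      rw [Matrix.mul_apply]
      simp only [hM, Matrix.zero_apply]
      by_cases hi : i = last
      · simp only [hi, if_pos rfl]
        exact congr_fun hC j
      · simp [hi]
    have := h R (hmul A hvA) (hmul B hvB)
    ext j
    have := congr_arg (fun X : Tri F n => (X : Matrix (Fin n) (Fin n) F) last j) this
    simpa [hR, hM] using this
  · intro h R hRA hRB
    apply Subtype.ext
    ext i j
    have hrow : ∀ C : Tri F n, R * C = 0 →
        Matrix.vecMul ((R : Matrix (Fin n) (Fin n) F) i) (C : Matrix (Fin n) (Fin n) F) = 0 := by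
      intro C hC
      ext k
      have := congr_arg (fun X : Tri F n => (X : Matrix (Fin n) (Fin n) F) i k) hC
      simpa [Matrix.mul_apply, Matrix.vecMul, dotProduct] using this
    have hv : Matrix.vecMul ((R : Matrix (Fin n) (Fin n) F) i)
        (Matrix.fromCols (A : Matrix (Fin n) (Fin n) F) (B : Matrix (Fin n) (Fin n) F)) = 0 := by
      rw [Matrix.vecMul_fromCols, hrow A hRA, hrow B hRB]
      ext (_ | _) <;> rfl
    have := h _ hv
    exact congr_fun this j
end

section
/- Let F be a field, n ≥ 1, and T_n the ring of lower triangular n×n matrices over F. A pair (A,B) ∈ ²T_n is unimodular, i.e., there exist X, Y ∈ T_n such that AX + BY is an invertible matrix (equivalently, a unit of T_n, since the inverse of an invertible lower triangular matrix is again lower triangular), if and only if for every index i one has A i i ≠ 0 or B i i ≠ 0. -/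
lemma tri_blockTriangular {F : Type*} [Field F] {n : ℕ} (A : Tri F n) :
    (A.val).BlockTriangular (OrderDual.toDual : Fin n → (Fin n)ᵒᵈ) := by
  intro i j h
  exact A.2 i j (by exact_mod_cast h)

lemma tri_mul_diag {F : Type*} [Field F] {n : ℕ} (A X : Tri F n) (i : Fin n) :
    (A.val * X.val) i i = A.val i i * X.val i i := by
  rw [Matrix.mul_apply]
  apply Finset.sum_eq_single_of_mem i (Finset.mem_univ i)
  intro k _ hk
  rcases lt_or_gt_of_ne hk with h | h
  · rw [X.2 k i h, mul_zero]
  · rw [A.2 i k h, zero_mul]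

/-- A pair `(A,B) ∈ ²T_n` is unimodular, i.e. there exist `X, Y ∈ T_n`
such that `AX + BY` is a unit of `T_n` (equivalently, an invertible matrix, since the
inverse of an invertible lower triangular matrix is again lower triangular), if and only
if for every index `i` one has `A i i ≠ 0` or `B i i ≠ 0`. -/
theorem unimodular_iff_diagonal
    {F : Type*} [Field F] {n : ℕ} (hn : 1 ≤ n) (A B : Tri F n) :
    (∃ X Y : Tri F n, IsUnit (A * X + B * Y)) ↔
      ∀ i : Fin n, A.val i i ≠ 0 ∨ B.val i i ≠ 0 := by
  constructor
  · rintro ⟨X, Y, hU⟩ i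
    have hM : IsUnit ((A * X + B * Y : Tri F n).val) := hU.map (Tri F n).subtype
    have hdet : (A * X + B * Y : Tri F n).val.det ≠ 0 := by
      exact (isUnit_iff_ne_zero.mp ((Matrix.isUnit_iff_isUnit_det _).mp hM))
    rw [Matrix.det_of_lowerTriangular _ (tri_blockTriangular _)] at hdet
    have hdiag : (A * X + B * Y : Tri F n).val i i ≠ 0 := by
      intro h0
      exact hdet (Finset.prod_eq_zero (Finset.mem_univ i) h0)
    have hval : (A * X + B * Y : Tri F n).val i i
        = A.val i i * X.val i i + B.val i i * Y.val i i := by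
      show (A.val * X.val + B.val * Y.val) i i = _
      rw [Matrix.add_apply, tri_mul_diag, tri_mul_diag]
    by_contra hc
    push_neg at hc
    rw [hval, hc.1, hc.2, zero_mul, zero_mul, add_zero] at hdiag
    exact hdiag rfl
  · intro h
    classical
    set x : Fin n → F := fun i => if A.val i i ≠ 0 then (A.val i i)⁻¹ else 0 with hx
    set y : Fin n → F := fun i => if A.val i i ≠ 0 then 0 else (B.val i i)⁻¹ with hy
    refine ⟨⟨Matrix.diagonal x, fun i j hij => Matrix.diagonal_apply_ne _ (ne_of_lt hij)⟩,
      ⟨Matrix.diagonal y, fun i j hij => Matrix.diagonal_apply_ne _ (ne_of_lt hij)⟩, ?_⟩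
    set M : Tri F n := A * ⟨Matrix.diagonal x, fun i j hij =>
        Matrix.diagonal_apply_ne _ (ne_of_lt hij)⟩ +
      B * ⟨Matrix.diagonal y, fun i j hij =>
        Matrix.diagonal_apply_ne _ (ne_of_lt hij)⟩ with hMdef
    have hdiag : ∀ i, M.val i i = 1 := by
      intro i
      have : M.val i i = A.val i i * x i + B.val i i * y i := by
        show (A.val * Matrix.diagonal x + B.val * Matrix.diagonal y) i i = _
        rw [Matrix.add_apply,
          tri_mul_diag A ⟨Matrix.diagonal x, fun i j hij =>
            Matrix.diagonal_apply_ne _ (ne_of_lt hij)⟩,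
          tri_mul_diag B ⟨Matrix.diagonal y, fun i j hij =>
            Matrix.diagonal_apply_ne _ (ne_of_lt hij)⟩]
        simp [Matrix.diagonal_apply_eq]
      rw [this, hx, hy]
      by_cases hA : A.val i i ≠ 0
      · simp [hA, mul_inv_cancel₀ hA]
      · have hB : B.val i i ≠ 0 := (h i).resolve_left hA
        simp [hA, mul_inv_cancel₀ hB]
    have hdet : M.val.det = 1 := by
      rw [Matrix.det_of_lowerTriangular _ (tri_blockTriangular M)]
      simp [hdiag]
    have hU : IsUnit M.val := (Matrix.isUnit_iff_isUnit_det _).mpr (by rw [hdet]; exact isUnit_one)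
    haveI : Invertible M.val := M.val.invertibleOfIsUnitDet (by rw [hdet]; exact isUnit_one)
    have hinv : M.val⁻¹ ∈ Tri F n := by
      intro i j hij
      exact Matrix.blockTriangular_inv_of_blockTriangular (tri_blockTriangular M)
        (show (OrderDual.toDual j : (Fin n)ᵒᵈ) < OrderDual.toDual i from by exact_mod_cast hij)
    refine isUnit_iff_exists.mpr ⟨⟨M.val⁻¹, hinv⟩, ?_, ?_⟩
    · exact Subtype.ext (Matrix.mul_nonsing_inv _ (by rw [hdet]; exact isUnit_one))
    · exact Subtype.ext (Matrix.nonsing_inv_mul _ (by rw [hdet]; exact isUnit_one))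
end

section
/- Let F be a field, n ≥ 1, and T_n the ring of lower triangular n×n matrices over F. A pair (A,B) ∈ ²T_n is an outlier generating a free cyclic submodule (i.e., (A,B) belongs to no cyclic submodule T_n(C,D) with (C,D) unimodular, and the cyclic submodule T_n(A,B) is free) if and only if (A,B) is not unimodular and the rank of the n×(2n) matrix [A|B] equals n. -/
/-- The cyclic left submodule `T_n(A,B) = {(RA, RB) : R ∈ T_n}` of `²T_n`. -/
def cyc {F : Type*} [Field F] {n : ℕ} (A B : Tri F n) : Set (Tri F n × Tri F n) :=
  {p | ∃ R : Tri F n, p = (R * A, R * B)}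

/-- A pair `(A,B) ∈ ²T_n` is unimodular if there are `X, Y ∈ T_n` with `AX + BY`
a unit of `T_n`. -/
def Unimodular {F : Type*} [Field F] {n : ℕ} (A B : Tri F n) : Prop :=
  ∃ X Y : Tri F n, IsUnit (A * X + B * Y)

/-- A pair `(A,B) ∈ ²T_n` is an outlier if it belongs to no cyclic submodule generated by
a unimodular pair. -/
def Outlier {F : Type*} [Field F] {n : ℕ} (A B : Tri F n) : Prop :=
  ¬ ∃ C D : Tri F n, Unimodular C D ∧ (A, B) ∈ cyc C D

section MyHelpers
open Matrix

variable {F : Type*} [Field F] {n : ℕ}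

lemma my_rank_eq_card_iff_li {m o : Type*} [Fintype m] [Fintype o] (M : Matrix m o F) :
    M.rank = Fintype.card m ↔ LinearIndependent F (fun i => M i) := by
  rw [Matrix.rank_eq_finrank_span_row, linearIndependent_iff_card_eq_finrank_span, Set.finrank]
  exact eq_comm

lemma my_isUnit_of_rank_eq (M : Matrix (Fin n) (Fin n) F) (h : M.rank = n) : IsUnit M := by
  have key := my_rank_eq_card_iff_li M
  rw [Fintype.card_fin] at key
  exact Matrix.linearIndependent_rows_iff_isUnit.mp (key.mp h)

lemma my_rank_fromColumns_eq_iff (A B : Matrix (Fin n) (Fin n) F) :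
    (Matrix.fromCols A B).rank = n ↔
      ∀ v : Fin n → F, v ᵥ* A = 0 → v ᵥ* B = 0 → v = 0 := by
  have key := my_rank_eq_card_iff_li (Matrix.fromCols A B)
  rw [Fintype.card_fin] at key
  rw [key, show (fun i => Matrix.fromCols A B i) = (Matrix.fromCols A B).row from rfl,
    ← Matrix.vecMul_injective_iff]
  constructor
  · intro h v hA hB
    apply h
    show v ᵥ* _ = (0 : Fin n → F) ᵥ* _
    simp [Matrix.vecMul_fromCols, hA, hB]
  · intro h x y hxy
    have hsub : (x - y) ᵥ* Matrix.fromCols A B = 0 := by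
      rw [Matrix.sub_vecMul]
      simp only at hxy
      rw [hxy, sub_self]
    rw [Matrix.vecMul_fromCols] at hsub
    have hA : (x - y) ᵥ* A = 0 := funext fun j => congr_fun hsub (Sum.inl j)
    have hB : (x - y) ᵥ* B = 0 := funext fun j => congr_fun hsub (Sum.inr j)
    exact sub_eq_zero.mp (h _ hA hB)

lemma my_coe_mul_tri (R S : Tri F n) :
    ((R * S : Tri F n) : Matrix (Fin n) (Fin n) F) = (R : Matrix (Fin n) (Fin n) F) * S := rfl

lemma my_tri_row_vecMul (R : Tri F n) (A : Tri F n) (i : Fin n) :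
    ((R : Matrix (Fin n) (Fin n) F) i) ᵥ* (A : Matrix (Fin n) (Fin n) F)
      = ((R * A : Tri F n) : Matrix (Fin n) (Fin n) F) i := by
  funext j
  simp [Matrix.vecMul, Matrix.mul_apply, dotProduct, my_coe_mul_tri]

/-- A lower triangular matrix invertible as a matrix is a unit of `Tri`. -/
lemma my_isUnit_tri {R : Tri F n} (h : IsUnit (R : Matrix (Fin n) (Fin n) F)) : IsUnit R := by
  letI := h.invertible
  have hbt : Matrix.BlockTriangular (R : Matrix (Fin n) (Fin n) F) OrderDual.toDual :=
    fun i j hij => R.2 i j hij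
  have hbi := Matrix.blockTriangular_inv_of_blockTriangular hbt
  have hmem : (R : Matrix (Fin n) (Fin n) F)⁻¹ ∈ Tri F n := fun i j hij => hbi hij
  refine ⟨⟨R, ⟨_, hmem⟩, ?_, ?_⟩, rfl⟩
  · exact Subtype.ext (Matrix.mul_inv_of_invertible _)
  · exact Subtype.ext (Matrix.inv_mul_of_invertible _)

/-- Freeness of the cyclic module is equivalent to the row-vector condition. -/
lemma my_free_iff_vec (hn : 1 ≤ n) (A B : Tri F n) :
    (∀ R : Tri F n, R * A = 0 → R * B = 0 → R = 0) ↔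
      ∀ v : Fin n → F, v ᵥ* (A : Matrix (Fin n) (Fin n) F) = 0 →
        v ᵥ* (B : Matrix (Fin n) (Fin n) F) = 0 → v = 0 := by
  constructor
  · intro h v hA hB
    set top : Fin n := ⟨n - 1, by omega⟩ with htop
    set Rm : Matrix (Fin n) (Fin n) F := Matrix.of fun i j => if i = top then v j else 0 with hRm
    have hmem : Rm ∈ Tri F n := by
      intro i j hij
      simp only [hRm, Matrix.of_apply]
      split_ifs with h'
      · exfalso
        subst h'
        have hjn := j.isLt
        rw [Fin.lt_def] at hij
        simp only [htop] at hij
        omega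
      · rfl
    have hRA : (⟨Rm, hmem⟩ : Tri F n) * A = 0 := by
      apply Subtype.ext
      rw [my_coe_mul_tri]
      ext i j
      simp only [hRm, Matrix.mul_apply, Matrix.of_apply, Matrix.zero_apply]
      by_cases hi : i = top
      · simp only [hi, if_pos]
        simpa [Matrix.vecMul, dotProduct] using congr_fun hA j
      · simp [hi]
    have hRB : (⟨Rm, hmem⟩ : Tri F n) * B = 0 := by
      apply Subtype.ext
      rw [my_coe_mul_tri]
      ext i j
      simp only [hRm, Matrix.mul_apply, Matrix.of_apply, Matrix.zero_apply]
      by_cases hi : i = top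
      · simp only [hi, if_pos]
        simpa [Matrix.vecMul, dotProduct] using congr_fun hB j
      · simp [hi]
    have hz' : Rm = 0 := congrArg Subtype.val (h _ hRA hRB)
    funext j
    have := congr_fun (congr_fun hz' top) j
    simpa [hRm] using this
  · intro h R hA hB
    apply Subtype.ext
    ext i j
    have hvA : ((R : Matrix (Fin n) (Fin n) F) i) ᵥ* (A : Matrix (Fin n) (Fin n) F) = 0 := by
      rw [my_tri_row_vecMul, hA]; rfl
    have hvB : ((R : Matrix (Fin n) (Fin n) F) i) ᵥ* (B : Matrix (Fin n) (Fin n) F) = 0 := by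
      rw [my_tri_row_vecMul, hB]; rfl
    exact congr_fun (h _ hvA hvB) j

end MyHelpers

/-- A pair `(A,B) ∈ ²T_n` is an outlier generating a free cyclic
submodule if and only if `(A,B)` is not unimodular and the rank of the `n × 2n`
matrix `[A|B]` equals `n`. -/

theorem outlier_generating_free_iff
    {F : Type*} [Field F] {n : ℕ} (hn : 1 ≤ n) (A B : Tri F n) :
    (Outlier A B ∧ ∀ R : Tri F n, R * A = 0 → R * B = 0 → R = 0) ↔
      (¬ Unimodular A B ∧
        (Matrix.fromCols (A : Matrix (Fin n) (Fin n) F)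
          (B : Matrix (Fin n) (Fin n) F)).rank = n) := by
  constructor
  · rintro ⟨hout, hfree⟩
    refine ⟨fun huni => hout ⟨A, B, huni, 1, by simp⟩, ?_⟩
    exact (my_rank_fromColumns_eq_iff _ _).mpr ((my_free_iff_vec hn A B).mp hfree)
  · rintro ⟨huni, hrank⟩
    refine ⟨?_, (my_free_iff_vec hn A B).mpr ((my_rank_fromColumns_eq_iff _ _).mp hrank)⟩
    rintro ⟨C, D, ⟨X, Y, hU⟩, R, hR⟩
    have hA : A = R * C := congrArg Prod.fst hR
    have hB : B = R * D := congrArg Prod.snd hR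
    have hfac : Matrix.fromCols (A : Matrix (Fin n) (Fin n) F) (B : Matrix (Fin n) (Fin n) F)
        = (R : Matrix (Fin n) (Fin n) F) *
          Matrix.fromCols (C : Matrix (Fin n) (Fin n) F) (D : Matrix (Fin n) (Fin n) F) := by
      rw [Matrix.mul_fromCols, hA, hB, my_coe_mul_tri, my_coe_mul_tri]
    have hle : (Matrix.fromCols (A : Matrix (Fin n) (Fin n) F)
        (B : Matrix (Fin n) (Fin n) F)).rank ≤ (R : Matrix (Fin n) (Fin n) F).rank := by
      rw [hfac]
      exact Matrix.rank_mul_le_left _ _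
    rw [hrank] at hle
    have hge : (R : Matrix (Fin n) (Fin n) F).rank ≤ n := by
      simpa using Matrix.rank_le_card_height (R : Matrix (Fin n) (Fin n) F)
    have hRunit : IsUnit R := my_isUnit_tri (my_isUnit_of_rank_eq _ (le_antisymm hge hle))
    apply huni
    refine ⟨X, Y, ?_⟩
    have heq : A * X + B * Y = R * (C * X + D * Y) := by
      rw [hA, hB, mul_add, mul_assoc, mul_assoc]
    rw [heq]
    exact hRunit.mul hU
end

section
/- Let F be a field, n ≥ 2, and T_n the ring of lower triangular n×n matrices over F. If (A,B) ∈ ²T_n is a canonical pair, then the cyclic submodule T_n(A,B) is free. -/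
/-- A pair `(A,B) ∈ ²T_n` is canonical if for all `i` and all `j < i`:
`A i i ∈ {0,1}`, `B i j ∈ {0,1}`, `A i j = 0` and `B i i = 0`, and moreover the number of
nonzero entries of the `n × 2n` matrix `[A|B]` equals the rank of `[A|B]`, which is `n`. -/
def IsCanonical {F : Type*} [Field F] {n : ℕ} (A B : Tri F n) : Prop :=
  (∀ i : Fin n, A.val i i = 0 ∨ A.val i i = 1) ∧
  (∀ i j : Fin n, j < i → (B.val i j = 0 ∨ B.val i j = 1)) ∧
  (∀ i j : Fin n, j < i → A.val i j = 0) ∧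
  (∀ i : Fin n, B.val i i = 0) ∧
  {p : Fin n × (Fin n ⊕ Fin n) |
    Matrix.fromCols A.val B.val p.1 p.2 ≠ 0}.ncard = n ∧
  (Matrix.fromCols A.val B.val).rank = n

/-- If `(A,B) ∈ ²T_n` (`n ≥ 2`) is a canonical pair, then the cyclic
submodule `T_n(A,B)` is free, i.e. `R ∈ T_n` with `RA = 0` and `RB = 0` implies `R = 0`. -/
theorem canonical_generates_free
    {F : Type*} [Field F] {n : ℕ} (hn : 2 ≤ n) (A B : Tri F n)
    (hAB : IsCanonical A B) :
    ∀ R : Tri F n, R * A = 0 → R * B = 0 → R = 0 := by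
  intro R hRA hRB
  obtain ⟨-, -, -, -, -, hrank⟩ := hAB
  set M : Matrix (Fin n) (Fin n ⊕ Fin n) F := Matrix.fromCols A.val B.val with hM
  have hrankT : M.transpose.rank = n := by rw [Matrix.rank_transpose]; exact hrank
  have hker : LinearMap.ker M.transpose.mulVecLin = ⊥ := by
    have h1 := LinearMap.finrank_range_add_finrank_ker M.transpose.mulVecLin
    rw [show Module.finrank F (LinearMap.range M.transpose.mulVecLin) = n from hrankT] at h1
    simp only [Module.finrank_pi, Fintype.card_fin] at h1
    have h2 : Module.finrank F (LinearMap.ker M.transpose.mulVecLin) = 0 := by omega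
    exact Submodule.finrank_eq_zero.mp h2
  have hRM : R.val * M = 0 := by
    have hA : R.val * A.val = 0 := congrArg Subtype.val hRA
    have hB : R.val * B.val = 0 := congrArg Subtype.val hRB
    rw [hM, Matrix.mul_fromCols, hA, hB]
    ext i j
    cases j <;> simp
  have : ∀ j : Fin n, R.val j = 0 := by
    intro j
    have hvec : M.transpose.mulVecLin (R.val j) = 0 := by
      ext i
      have := congrFun (congrFun hRM j) i
      simpa [Matrix.mulVecLin, Matrix.mulVec, Matrix.mul_apply, Matrix.transpose_apply,
        dotProduct, Matrix.vecMul, mul_comm] using this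
    have := hker ▸ LinearMap.mem_ker.mpr hvec
    simpa using this
  ext i j
  exact congrFun (this i) j
end

section
/- Let F be a field, n ≥ 2, and T_n the ring of lower triangular n×n matrices over F. Let (A,B) and (C,D) be canonical pairs in ²T_n. If there exists an invertible 2×2 matrix g = [[X,Y],[W,Z]] over T_n such that the cyclic submodules T_n(AX+BW, AY+BZ) and T_n(C,D) are equal (that is, T_n(A,B) and T_n(C,D) lie in the same GL_2(T_n)-orbit), then (A,B) = (C,D). Consequently, distinct canonical pairs represent distinct GL_2(T_n)-orbits of free cyclic submodules. -/
open Matrix Finset Submodule Module in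
lemma canonical_sigma {F : Type*} [Field F] {n : ℕ} {A B : Tri F n} (h : IsCanonical A B) :
    ∃ σ : Fin n → Fin n ⊕ Fin n, Function.Injective σ ∧
      (∀ i j, σ i = Sum.inl j → j = i) ∧
      (∀ i j, σ i = Sum.inr j → j < i) ∧
      (∀ i q, Matrix.fromCols A.val B.val i q = if q = σ i then 1 else 0) := by
  classical
  obtain ⟨hAd, hBl, hAl, hBd, hcount, hrank⟩ := h
  set M : Matrix (Fin n) (Fin n ⊕ Fin n) F := Matrix.fromCols A.val B.val with hM
  have hentry : ∀ i q, M i q = 0 ∨ M i q = 1 := by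
    rintro i (j | j)
    · rcases lt_trichotomy j i with hlt | rfl | hlt
      · exact Or.inl (by simpa [hM] using hAl i j hlt)
      · simpa [hM] using hAd j
      · exact Or.inl (by simpa [hM] using A.prop i j hlt)
    · rcases lt_trichotomy j i with hlt | rfl | hlt
      · simpa [hM] using hBl i j hlt
      · exact Or.inl (by simpa [hM] using hBd j)
      · exact Or.inl (by simpa [hM] using B.prop i j hlt)
  have hspan : finrank F (Submodule.span F (Set.range M)) = n := by
    exact (Matrix.rank_eq_finrank_span_row M).symm.trans hrank
  have hrange : Set.range M = ↑(Finset.univ.image M) := by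
    ext x; exact ⟨fun ⟨j, hj⟩ => Finset.mem_coe.mpr (Finset.mem_image.mpr ⟨j, Finset.mem_univ j, hj⟩),
      fun hx => by obtain ⟨j, -, hj⟩ := Finset.mem_image.mp (Finset.mem_coe.mp hx); exact ⟨j, hj⟩⟩
  have hrows_inj : Function.Injective M := by
    have h1 : (n : ℕ) ≤ (Finset.univ.image M).card := by
      have h2 : Set.finrank F (↑(Finset.univ.image M) : Set (Fin n ⊕ Fin n → F)) ≤
          (Finset.univ.image M).card := finrank_span_finset_le_card _
      simp only [Set.finrank] at h2
      rw [← hrange] at h2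
      exact le_trans (le_of_eq hspan.symm) h2
    have h2 : (Finset.univ.image M).card ≤ (Finset.univ : Finset (Fin n)).card :=
      Finset.card_image_le
    have h3 : (Finset.univ.image M).card = (Finset.univ : Finset (Fin n)).card := by
      simp only [Finset.card_univ, Fintype.card_fin] at h2 ⊢; omega
    have h4 := Finset.card_image_iff.mp h3
    rw [Finset.coe_univ] at h4
    exact Set.injOn_univ.mp h4
  have hrows_ne : ∀ i, M i ≠ 0 := by
    intro i hi
    have hsub : Set.range M ⊆ insert 0 ↑((Finset.univ.erase i).image M) := by
      rintro _ ⟨j, rfl⟩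
      by_cases hj : j = i
      · subst hj; rw [hi]; exact Set.mem_insert _ _
      · exact Set.mem_insert_iff.mpr (Or.inr (by
          exact Finset.mem_coe.mpr (Finset.mem_image.mpr ⟨j, Finset.mem_erase.mpr ⟨hj, Finset.mem_univ j⟩, rfl⟩)))
    have hle : Submodule.span F (Set.range M) ≤
        Submodule.span F (↑((Finset.univ.erase i).image M) : Set (Fin n ⊕ Fin n → F)) :=
      le_trans (Submodule.span_mono hsub) (le_of_eq Submodule.span_insert_zero)
    have h1 := Submodule.finrank_mono hle
    have h2 : Set.finrank F (↑((Finset.univ.erase i).image M) : Set (Fin n ⊕ Fin n → F)) ≤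
        ((Finset.univ.erase i).image M).card := finrank_span_finset_le_card _
    have h3 : ((Finset.univ.erase i).image M).card ≤ n - 1 :=
      le_trans Finset.card_image_le (by simp)
    have hpos : 0 < n := i.pos
    rw [hspan] at h1
    simp only [Set.finrank] at h2
    omega
  have hone : ∀ i, ∃ q, M i q ≠ 0 ∧ ∀ q', M i q' ≠ 0 → q' = q := by
    set s0 := Finset.univ.filter (fun p : Fin n × (Fin n ⊕ Fin n) => M p.1 p.2 ≠ 0) with hs0
    have hcards : s0.card = n := by
      have hset : {p : Fin n × (Fin n ⊕ Fin n) | M p.1 p.2 ≠ 0} = ↑s0 := by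
        ext p; simp [hs0]
      rw [← Set.ncard_coe_finset, ← hset]
      exact hcount
    have hfib := Finset.card_eq_sum_card_fiberwise
      (f := Prod.fst) (s := s0) (t := Finset.univ) (fun p _ => Finset.mem_univ _)
    have hge : ∀ i : Fin n, 1 ≤ (s0.filter fun p => p.1 = i).card := by
      intro i
      obtain ⟨q, hq⟩ : ∃ q, M i q ≠ 0 := by
        by_contra hq; push_neg at hq; exact hrows_ne i (funext hq)
      exact Finset.card_pos.mpr ⟨(i, q), by simp [hs0, hq]⟩
    have heq1 : ∀ i : Fin n, (s0.filter fun p => p.1 = i).card = 1 := by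
      intro i
      by_contra hne
      have h2 : 2 ≤ (s0.filter fun p => p.1 = i).card := by
        have := hge i; omega
      have hsum : (Finset.univ.erase i).card ≤
          ∑ j ∈ Finset.univ.erase i, (s0.filter fun p => p.1 = j).card := by
        simpa using Finset.card_nsmul_le_sum (Finset.univ.erase i) _ 1 (fun j _ => hge j)
      have hsplit : ∑ j : Fin n, (s0.filter fun p => p.1 = j).card =
          (s0.filter fun p => p.1 = i).card +
            ∑ j ∈ Finset.univ.erase i, (s0.filter fun p => p.1 = j).card :=
        (Finset.add_sum_erase _ _ (Finset.mem_univ i)).symm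
      have hcarde : (Finset.univ.erase i).card = n - 1 := by simp
      have hpos : 0 < n := i.pos
      rw [hcards, hsplit] at hfib
      omega
    intro i
    obtain ⟨a, ha⟩ := Finset.card_eq_one.mp (heq1 i)
    have hai : a ∈ s0.filter fun p => p.1 = i := by rw [ha]; exact Finset.mem_singleton_self a
    simp only [hs0, Finset.mem_filter, Finset.mem_univ, true_and] at hai
    obtain ⟨hane, ha1⟩ := hai
    refine ⟨a.2, by rwa [ha1] at hane, ?_⟩
    intro q' hq'
    have hmem : (i, q') ∈ s0.filter fun p => p.1 = i := by simp [hs0, hq']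
    rw [ha, Finset.mem_singleton] at hmem
    have := congrArg Prod.snd hmem
    simpa using this
  choose σ hσne hσuniq using hone
  have hrowdesc : ∀ i q, M i q = if q = σ i then 1 else 0 := by
    intro i q
    by_cases hq : q = σ i
    · rw [if_pos hq, hq]
      rcases hentry i (σ i) with h0 | h1
      · exact absurd h0 (hσne i)
      · exact h1
    · rw [if_neg hq]
      by_contra h0
      exact hq (hσuniq i q h0)
  have hinl : ∀ i j, σ i = Sum.inl j → j = i := by
    intro i j hj
    have hne := hσne i
    rw [hj] at hne
    have hA : A.val i j ≠ 0 := by simpa [hM] using hne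
    rcases lt_trichotomy j i with hlt | heq | hlt
    · exact absurd (hAl i j hlt) hA
    · exact heq
    · exact absurd (A.prop i j hlt) hA
  have hinr : ∀ i j, σ i = Sum.inr j → j < i := by
    intro i j hj
    have hne := hσne i
    rw [hj] at hne
    have hB : B.val i j ≠ 0 := by simpa [hM] using hne
    rcases lt_trichotomy j i with hlt | heq | hlt
    · exact hlt
    · exact absurd (heq ▸ hBd i) hB
    · exact absurd (B.prop i j hlt) hB
  have hσinj : Function.Injective σ := by
    intro i i' hii
    apply hrows_inj
    funext q
    rw [hrowdesc, hrowdesc, hii]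
  exact ⟨σ, hσinj, hinl, hinr, hrowdesc⟩

open Matrix in
lemma sigma_free {F : Type*} [Field F] {n : ℕ} {M : Matrix (Fin n) (Fin n ⊕ Fin n) F}
    {σ : Fin n → Fin n ⊕ Fin n} (hσ : Function.Injective σ)
    (hrow : ∀ i q, M i q = if q = σ i then 1 else 0)
    (R : Matrix (Fin n) (Fin n) F) (hR : R * M = 0) : R = 0 := by
  ext i k
  have h0 : (R * M) i (σ k) = 0 := by rw [hR]; rfl
  rw [Matrix.mul_apply] at h0
  have hterm : ∀ j, R i j * M j (σ k) = if j = k then R i j else 0 := by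
    intro j
    rw [hrow]
    by_cases hk : j = k
    · subst hk; simp
    · have : σ k ≠ σ j := fun hh => hk (hσ hh).symm
      simp [this, hk]
  rw [Finset.sum_congr rfl (fun j _ => hterm j), Finset.sum_ite_eq'] at h0
  simpa using h0

open Matrix in
lemma sigma_rowpick {F : Type*} [Field F] {n : ℕ} {M : Matrix (Fin n) (Fin n ⊕ Fin n) F}
    {σ : Fin n → Fin n ⊕ Fin n} (hrow : ∀ i q, M i q = if q = σ i then 1 else 0)
    (N : Matrix (Fin n ⊕ Fin n) (Fin n ⊕ Fin n) F) (k : Fin n) (p : Fin n ⊕ Fin n) :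
    (M * N) k p = N (σ k) p := by
  rw [Matrix.mul_apply]
  have hterm : ∀ q, M k q * N q p = if q = σ k then N q p else 0 := by
    intro q
    rw [hrow]
    by_cases hq : q = σ k <;> simp [hq]
  rw [Finset.sum_congr rfl (fun q _ => hterm q), Finset.sum_ite_eq']
  simp

open Matrix in
lemma blocks_mul_one {F : Type*} [Field F] {n : ℕ}
    (a b : Matrix (Fin 2) (Fin 2) (Tri F n)) (hab : a * b = 1) :
    (Matrix.fromBlocks (a 0 0).val (a 0 1).val (a 1 0).val (a 1 1).val) *
    (Matrix.fromBlocks (b 0 0).val (b 0 1).val (b 1 0).val (b 1 1).val) = 1 := by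
  have e : ∀ i j, a i 0 * b 0 j + a i 1 * b 1 j
      = (1 : Matrix (Fin 2) (Fin 2) (Tri F n)) i j := by
    intro i j
    rw [show (1 : Matrix (Fin 2) (Fin 2) (Tri F n)) i j = (a * b) i j from by rw [hab],
      Matrix.mul_apply, Fin.sum_univ_two]
  have v : ∀ i j, (a i 0).val * (b 0 j).val + (a i 1).val * (b 1 j).val
      = (((1 : Matrix (Fin 2) (Fin 2) (Tri F n)) i j : Tri F n) :
          Matrix (Fin n) (Fin n) F) := by
    intro i j
    have := congrArg Subtype.val (e i j)
    push_cast at this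
    exact this
  have h00 := v 0 0; have h01 := v 0 1; have h10 := v 1 0; have h11 := v 1 1
  simp only [Matrix.one_apply_eq] at h00 h11
  rw [Matrix.one_apply_ne (by decide : (0 : Fin 2) ≠ 1)] at h01
  rw [Matrix.one_apply_ne (by decide : (1 : Fin 2) ≠ 0)] at h10
  simp only [OneMemClass.coe_one, ZeroMemClass.coe_zero] at h00 h01 h10 h11
  rw [Matrix.fromBlocks_multiply, h00, h01, h10, h11, Matrix.fromBlocks_one]
set_option maxHeartbeats 1000000 in
/-- Let `(A,B)` and `(C,D)` be canonical pairs in `²T_n` (`n ≥ 2`).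
If there is an invertible `2 × 2` matrix `g = [[X,Y],[W,Z]]` over `T_n` such that the
cyclic submodules `T_n(AX + BW, AY + BZ)` and `T_n(C,D)` coincide — that is, `T_n(A,B)`
and `T_n(C,D)` lie in the same `GL_2(T_n)`-orbit — then `(A,B) = (C,D)`. -/
theorem canonical_pairs_distinct_orbits
    {F : Type*} [Field F] {n : ℕ} (hn : 2 ≤ n) (A B C D : Tri F n)
    (hAB : IsCanonical A B) (hCD : IsCanonical C D)
    (h : ∃ g : Matrix (Fin 2) (Fin 2) (Tri F n), IsUnit g ∧
      cyc (A * g 0 0 + B * g 1 0) (A * g 0 1 + B * g 1 1) = cyc C D) :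
    A = C ∧ B = D := by
  classical
  obtain ⟨g, hg, hcyc⟩ := h
  obtain ⟨σ, hσinj, hσinl, hσinr, hσrow⟩ := canonical_sigma hAB
  obtain ⟨τ, hτinj, hτinl, hτinr, hτrow⟩ := canonical_sigma hCD
  set MA : Matrix (Fin n) (Fin n ⊕ Fin n) F := Matrix.fromCols A.val B.val with hMA
  set MC : Matrix (Fin n) (Fin n ⊕ Fin n) F := Matrix.fromCols C.val D.val with hMC
  obtain ⟨g', hgg', -⟩ := isUnit_iff_exists.mp hg
  set G : Matrix (Fin n ⊕ Fin n) (Fin n ⊕ Fin n) F :=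
    Matrix.fromBlocks (g 0 0).val (g 0 1).val (g 1 0).val (g 1 1).val with hG
  set H : Matrix (Fin n ⊕ Fin n) (Fin n ⊕ Fin n) F :=
    Matrix.fromBlocks (g' 0 0).val (g' 0 1).val (g' 1 0).val (g' 1 1).val with hH
  have hGH : G * H = 1 := blocks_mul_one g g' hgg'
  set A' : Tri F n := A * g 0 0 + B * g 1 0 with hA'
  set B' : Tri F n := A * g 0 1 + B * g 1 1 with hB'
  have h1 : (A', B') ∈ cyc C D := by rw [← hcyc]; exact ⟨1, by simp⟩
  have h2 : (C, D) ∈ cyc A' B' := by rw [hcyc]; exact ⟨1, by simp⟩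
  obtain ⟨R, hR⟩ := h1
  obtain ⟨S, hS⟩ := h2
  have hRA : A'.val = R.val * C.val := by
    have := congrArg (fun p : Tri F n × Tri F n => (p.1 : Matrix (Fin n) (Fin n) F)) hR
    push_cast at this; exact this
  have hRB : B'.val = R.val * D.val := by
    have := congrArg (fun p : Tri F n × Tri F n => (p.2 : Matrix (Fin n) (Fin n) F)) hR
    push_cast at this; exact this
  have hSC : C.val = S.val * A'.val := by
    have := congrArg (fun p : Tri F n × Tri F n => (p.1 : Matrix (Fin n) (Fin n) F)) hS
    push_cast at this; exact this
  have hSD : D.val = S.val * B'.val := by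
    have := congrArg (fun p : Tri F n × Tri F n => (p.2 : Matrix (Fin n) (Fin n) F)) hS
    push_cast at this; exact this
  have hMA' : Matrix.fromCols A'.val B'.val = MA * G := by
    rw [hMA, hG, Matrix.fromCols_mul_fromBlocks]
    have e1 : A'.val = A.val * (g 0 0).val + B.val * (g 1 0).val := by
      rw [hA']; push_cast; ring_nf
    have e2 : B'.val = A.val * (g 0 1).val + B.val * (g 1 1).val := by
      rw [hB']; push_cast; ring_nf
    rw [e1, e2]
  have hM'R : Matrix.fromCols A'.val B'.val = R.val * MC := by
    rw [hRA, hRB, hMC, Matrix.mul_fromCols]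
  have hMCS : MC = S.val * Matrix.fromCols A'.val B'.val := by
    rw [Matrix.mul_fromCols, ← hSC, ← hSD]
  have hfreeC : ∀ R' : Matrix (Fin n) (Fin n) F, R' * MC = 0 → R' = 0 :=
    fun R' hh => sigma_free hτinj hτrow R' hh
  have hfreeA : ∀ R' : Matrix (Fin n) (Fin n) F, R' * MA = 0 → R' = 0 :=
    fun R' hh => sigma_free hσinj hσrow R' hh
  have hSR : S.val * R.val = 1 := by
    have hMCfix : MC = S.val * R.val * MC := by
      conv_lhs => rw [hMCS, hM'R]
      rw [Matrix.mul_assoc]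
    have h0 : (1 - S.val * R.val) * MC = 0 := by
      rw [Matrix.sub_mul, Matrix.one_mul, ← hMCfix, sub_self]
    have := hfreeC _ h0
    rwa [sub_eq_zero, eq_comm] at this
  have hRS : R.val * S.val = 1 := by
    have h3 : MA * G = R.val * S.val * (MA * G) := by
      conv_lhs => rw [← hMA', hM'R, hMCS]
      conv_rhs => rw [← hMA']
      rw [Matrix.mul_assoc]
    have h5 : (1 - R.val * S.val) * (MA * G) = 0 := by
      rw [Matrix.sub_mul, Matrix.one_mul, ← h3, sub_self]
    have h6 : (1 - R.val * S.val) * MA = 0 := by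
      calc (1 - R.val * S.val) * MA
          = (1 - R.val * S.val) * MA * (G * H) := by rw [hGH, Matrix.mul_one]
        _ = ((1 - R.val * S.val) * (MA * G)) * H := by simp only [Matrix.mul_assoc]
        _ = 0 := by rw [h5, Matrix.zero_mul]
    have := hfreeA _ h6
    rwa [sub_eq_zero, eq_comm] at this
  have hdiag : ∀ k : Fin n, R.val k k * S.val k k = 1 := by
    intro k
    have h7 : (R.val * S.val) k k = 1 := by rw [hRS, Matrix.one_apply_eq]
    rw [Matrix.mul_apply] at h7
    have h8 : ∑ j, R.val k j * S.val j k = R.val k k * S.val k k :=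
      Finset.sum_eq_single k
        (fun j _ hj => by
          rcases lt_or_gt_of_ne hj with hlt | hgt
          · rw [S.prop j k hlt, mul_zero]
          · rw [R.prop k j hgt, zero_mul])
        (fun hk => absurd (Finset.mem_univ k) hk)
    rw [h8] at h7
    exact h7
  have hRkk : ∀ k, R.val k k ≠ 0 := fun k => left_ne_zero_of_mul_eq_one (hdiag k)
  have hSkk : ∀ k, S.val k k ≠ 0 := fun k => right_ne_zero_of_mul_eq_one (hdiag k)
  have hMG : MA * G = R.val * MC := by rw [← hMA', hM'R]
  have hGdiag : ∀ k, G (σ k) (τ k) = R.val k k := by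
    intro k
    have e1 : G (σ k) (τ k) = (R.val * MC) k (τ k) := by
      rw [← hMG, sigma_rowpick hσrow]
    rw [e1, Matrix.mul_apply]
    have hterm : ∀ i, R.val k i * MC i (τ k) = if i = k then R.val k i else 0 := by
      intro i
      rw [hτrow]
      by_cases hik : i = k
      · subst hik; simp
      · have hne : τ k ≠ τ i := fun hh => hik (hτinj hh).symm
        simp [hne, hik]
    rw [Finset.sum_congr rfl (fun i _ => hterm i), Finset.sum_ite_eq']
    simp
  have hCH : MC * H = S.val * MA := by
    have e1 : MC * H = S.val * (MA * G) * H := by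
      conv_lhs => rw [hMCS, hMA']
    rw [e1]
    simp only [Matrix.mul_assoc]
    rw [hGH, Matrix.mul_one]
  have hHdiag : ∀ k, H (τ k) (σ k) = S.val k k := by
    intro k
    have e1 : H (τ k) (σ k) = (S.val * MA) k (σ k) := by
      rw [← hCH, sigma_rowpick hτrow]
    rw [e1, Matrix.mul_apply]
    have hterm : ∀ i, S.val k i * MA i (σ k) = if i = k then S.val k i else 0 := by
      intro i
      rw [hσrow]
      by_cases hik : i = k
      · subst hik; simp
      · have hne : σ k ≠ σ i := fun hh => hik (hσinj hh).symm
        simp [hne, hik]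
    rw [Finset.sum_congr rfl (fun i _ => hterm i), Finset.sum_ite_eq']
    simp
  have htriG : ∀ p q : Fin n ⊕ Fin n,
      (Sum.elim id id p : Fin n) < Sum.elim id id q → G p q = 0 := by
    rintro (a | a) (b | b) hab <;>
      simp only [Sum.elim_inl, Sum.elim_inr, id_eq] at hab <;>
      simp only [hG, Matrix.fromBlocks_apply₁₁, Matrix.fromBlocks_apply₁₂,
        Matrix.fromBlocks_apply₂₁, Matrix.fromBlocks_apply₂₂]
    · exact (g 0 0).prop a b hab
    · exact (g 0 1).prop a b hab
    · exact (g 1 0).prop a b hab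
    · exact (g 1 1).prop a b hab
  have htriH : ∀ p q : Fin n ⊕ Fin n,
      (Sum.elim id id p : Fin n) < Sum.elim id id q → H p q = 0 := by
    rintro (a | a) (b | b) hab <;>
      simp only [Sum.elim_inl, Sum.elim_inr, id_eq] at hab <;>
      simp only [hH, Matrix.fromBlocks_apply₁₁, Matrix.fromBlocks_apply₁₂,
        Matrix.fromBlocks_apply₂₁, Matrix.fromBlocks_apply₂₂]
    · exact (g' 0 0).prop a b hab
    · exact (g' 0 1).prop a b hab
    · exact (g' 1 0).prop a b hab
    · exact (g' 1 1).prop a b hab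
  have hord : ∀ k, (Sum.elim id id (σ k) : Fin n) = Sum.elim id id (τ k) := by
    intro k
    by_contra hne
    rcases lt_or_gt_of_ne hne with hlt | hgt
    · exact hRkk k (by rw [← hGdiag k]; exact htriG _ _ hlt)
    · exact hSkk k (by rw [← hHdiag k]; exact htriH _ _ hgt)
  have hστ : ∀ k, σ k = τ k := by
    intro k
    have hok := hord k
    cases hσk : σ k with
    | inl a =>
      have ha : a = k := hσinl k a hσk
      cases hτk : τ k with
      | inl b =>
        have hb : b = k := hτinl k b hτk
        rw [ha, hb]
      | inr b =>
        have hb : b < k := hτinr k b hτk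
        rw [hσk, hτk] at hok
        simp only [Sum.elim_inl, Sum.elim_inr, id_eq] at hok
        rw [ha] at hok
        rw [← hok] at hb
        exact absurd hb (lt_irrefl k)
    | inr a =>
      have ha : a < k := hσinr k a hσk
      cases hτk : τ k with
      | inl b =>
        have hb : b = k := hτinl k b hτk
        rw [hσk, hτk] at hok
        simp only [Sum.elim_inl, Sum.elim_inr, id_eq] at hok
        rw [hb] at hok
        rw [hok] at ha
        exact absurd ha (lt_irrefl k)
      | inr b =>
        have hb : b < k := hτinr k b hτk
        rw [hσk, hτk] at hok
        simp only [Sum.elim_inl, Sum.elim_inr, id_eq] at hok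
        rw [hok]
  have hAC : A.val = C.val := by
    funext i j
    rw [show A.val i j = MA i (Sum.inl j) from by
          rw [hMA]; exact (Matrix.fromCols_apply_inl _ _ _ _).symm,
        show C.val i j = MC i (Sum.inl j) from by
          rw [hMC]; exact (Matrix.fromCols_apply_inl _ _ _ _).symm,
        hσrow, hτrow, hστ i]
  have hBD : B.val = D.val := by
    funext i j
    rw [show B.val i j = MA i (Sum.inr j) from by
          rw [hMA]; exact (Matrix.fromCols_apply_inr _ _ _ _).symm,
        show D.val i j = MC i (Sum.inr j) from by
          rw [hMC]; exact (Matrix.fromCols_apply_inr _ _ _ _).symm,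
        hσrow, hτrow, hστ i]
  exact ⟨Subtype.ext hAC, Subtype.ext hBD⟩
end

section
/- Let F be a field, n ≥ 2, and T_n the ring of lower triangular n×n matrices over F. The set of canonical pairs (A,B) ∈ ²T_n is in bijection with the set of partitions of the set {1, 2, …, n}; in particular, the number of canonical pairs equals the Bell number B_n. -/
namespace CanonicalPairsAux

open Matrix


open Finset

variable {n : ℕ}

/-- Parent functions: `f i ≤ i` and `f` injective on non-fixed points. -/
def IsParent (f : Fin n → Fin n) : Prop :=
  (∀ i, f i ≤ i) ∧ Set.InjOn f {i | f i ≠ i}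

lemma iterate_le {f : Fin n → Fin n} (hle : ∀ i, f i ≤ i) (i : Fin n) (k : ℕ) :
    f^[k] i ≤ i := by
  induction k with
  | zero => simp
  | succ k ih =>
    rw [Function.iterate_succ_apply']
    exact le_trans (hle _) ih

lemma iterate_le_self {f : Fin n → Fin n} (hle : ∀ i, f i ≤ i) (i : Fin n) {k : ℕ}
    (hk : 1 ≤ k) : f^[k] i ≤ f i := by
  obtain ⟨m, rfl⟩ : ∃ m, k = m + 1 := ⟨k - 1, by omega⟩
  rw [Function.iterate_succ_apply]
  exact iterate_le hle (f i) m

lemma iterate_n_fixed {f : Fin n → Fin n} (hle : ∀ i, f i ≤ i) (i : Fin n) :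
    f (f^[n] i) = f^[n] i := by
  have key : ∀ k, f (f^[k] i) = f^[k] i ∨ (f^[k] i : ℕ) + k ≤ (i : ℕ) := by
    intro k
    induction k with
    | zero => right; simp
    | succ k ih =>
      rcases ih with h | h
      · left
        rw [Function.iterate_succ_apply', h, h]
      · rcases eq_or_ne (f (f^[k] i)) (f^[k] i) with h2 | h2
        · left
          rw [Function.iterate_succ_apply', h2, h2]
        · right
          have hlt : (f (f^[k] i) : ℕ) < (f^[k] i : ℕ) :=
            Fin.lt_def.mp (lt_of_le_of_ne (hle _) h2)
          rw [Function.iterate_succ_apply']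
          omega
  rcases key n with h | h
  · exact h
  · exact absurd h (by have := i.isLt; omega)

lemma iterate_root_eq {f : Fin n → Fin n} (hle : ∀ i, f i ≤ i) (i : Fin n) (k : ℕ) :
    f^[k] (f^[n] i) = f^[n] i := by
  induction k with
  | zero => simp
  | succ k ih => rw [Function.iterate_succ_apply', ih, iterate_n_fixed hle]

lemma root_apply {f : Fin n → Fin n} (hle : ∀ i, f i ≤ i) (i : Fin n) :
    f^[n] (f i) = f^[n] i := by
  rw [← Function.iterate_succ_apply, Function.iterate_succ_apply', iterate_n_fixed hle]

lemma root_iterate_apply {f : Fin n → Fin n} (hle : ∀ i, f i ≤ i) (i : Fin n) (k : ℕ) :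
    f^[n] (f^[k] i) = f^[n] i := by
  induction k with
  | zero => simp
  | succ k ih => rw [Function.iterate_succ_apply', root_apply hle, ih]

/-- Meeting lemma: if two descent chains meet, one point is an iterate of the other. -/
lemma meet {f : Fin n → Fin n} (hf : IsParent f) :
    ∀ (N a b : ℕ) (x y : Fin n), a + b ≤ N → f^[a] x = f^[b] y →
      (∃ k, f^[k] x = y) ∨ (∃ k, f^[k] y = x) := by
  intro N
  induction N with
  | zero =>
    intro a b x y hab h
    obtain ⟨rfl, rfl⟩ : a = 0 ∧ b = 0 := by omega
    exact Or.inl ⟨0, h⟩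
  | succ N ih =>
    intro a b x y hab h
    match a, b with
    | 0, b => exact Or.inr ⟨b, by simpa using h.symm⟩
    | a, 0 => exact Or.inl ⟨a, by simpa using h⟩
    | a+1, b+1 =>
      have hu : f (f^[a] x) = f (f^[b] y) := by
        simpa only [Function.iterate_succ_apply'] using h
      rcases eq_or_ne (f^[a] x) (f^[b] y) with huv | huv
      · exact ih a b x y (by omega) huv
      · by_cases hfu : f (f^[a] x) = f^[a] x
        · refine ih a (b+1) x y (by omega) ?_
          rw [← hfu, hu, Function.iterate_succ_apply']
        · have hfv : f (f^[b] y) = f^[b] y := by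
            by_contra hfv
            exact huv (hf.2 hfu hfv hu)
          refine ih (a+1) b x y (by omega) ?_
          rw [Function.iterate_succ_apply', hu, hfv]

lemma desc {f : Fin n → Fin n} (hf : IsParent f) {x y : Fin n}
    (hr : f^[n] x = f^[n] y) (hxy : x < y) : ∃ k, 1 ≤ k ∧ f^[k] y = x := by
  rcases meet hf (n + n) n n x y le_rfl hr with ⟨k, hk⟩ | ⟨k, hk⟩
  · exact absurd hk (by
      intro hk
      exact absurd (hk ▸ iterate_le hf.1 x k) (not_le.mpr hxy))
  · refine ⟨k, ?_, hk⟩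
    rcases Nat.eq_zero_or_pos k with rfl | h
    · simp at hk; exact absurd hk (ne_of_gt hxy)
    · exact h

/-- If `f x < x` then `f x` bounds every strictly smaller element with the same root. -/
lemma le_parent {f : Fin n → Fin n} (hf : IsParent f) {x y : Fin n}
    (hr : f^[n] x = f^[n] y) (hxy : x < y) : x ≤ f y := by
  obtain ⟨k, hk1, hk⟩ := desc hf hr hxy
  exact hk ▸ iterate_le_self hf.1 y hk1

lemma root_fixed_no_below {f : Fin n → Fin n} (hf : IsParent f) {x y : Fin n}
    (hfix : f y = y) (hr : f^[n] x = f^[n] y) (hxy : x < y) : False := by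
  obtain ⟨k, _, hk⟩ := desc hf hr hxy
  rw [Function.iterate_fixed hfix] at hk
  exact absurd hk (ne_of_gt hxy)


/-! ### From finpartitions to parent functions and back -/

/-- The predecessor of `i` in its part: the largest element of the part below `i`,
or `i` itself if there is none. -/
def pred (Q : Finpartition (univ : Finset (Fin n))) (i : Fin n) : Fin n :=
  if h : ((Q.part i).filter (· < i)).Nonempty then ((Q.part i).filter (· < i)).max' h else i

lemma pred_mem_part (Q : Finpartition (univ : Finset (Fin n))) (i : Fin n) :
    pred Q i ∈ Q.part i := by
  rw [pred]
  split_ifs with h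
  · exact (mem_filter.mp (Finset.max'_mem _ h)).1
  · exact Q.mem_part (mem_univ i)

lemma pred_le (Q : Finpartition (univ : Finset (Fin n))) (i : Fin n) : pred Q i ≤ i := by
  rw [pred]
  split_ifs with h
  · exact le_of_lt (mem_filter.mp (Finset.max'_mem _ h)).2
  · exact le_rfl

lemma pred_lt_of_ne (Q : Finpartition (univ : Finset (Fin n))) {i : Fin n}
    (h : pred Q i ≠ i) : pred Q i < i :=
  lt_of_le_of_ne (pred_le Q i) h

lemma le_pred (Q : Finpartition (univ : Finset (Fin n))) {i j : Fin n}
    (hj : j ∈ Q.part i) (hji : j < i) : j ≤ pred Q i := by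
  have hmem : j ∈ (Q.part i).filter (· < i) := mem_filter.mpr ⟨hj, hji⟩
  rw [pred]
  split_ifs with h
  · exact Finset.le_max' _ j hmem
  · exact absurd ⟨j, hmem⟩ h

lemma pred_empty_iff (Q : Finpartition (univ : Finset (Fin n))) {i j : Fin n}
    (hfix : pred Q i = i) (hj : j ∈ Q.part i) (hji : j < i) : False := by
  have hmem : j ∈ (Q.part i).filter (· < i) := mem_filter.mpr ⟨hj, hji⟩
  have hne : ((Q.part i).filter (· < i)).Nonempty := ⟨j, hmem⟩
  have hlt : pred Q i < i := by
    rw [pred, dif_pos hne]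
    exact (mem_filter.mp (Finset.max'_mem _ hne)).2
  rw [hfix] at hlt
  exact lt_irrefl _ hlt

lemma part_pred (Q : Finpartition (univ : Finset (Fin n))) (i : Fin n) :
    Q.part (pred Q i) = Q.part i :=
  (Q.mem_part_iff_part_eq_part (mem_univ _) (mem_univ _)).mp (pred_mem_part Q i)

lemma isParent_pred (Q : Finpartition (univ : Finset (Fin n))) : IsParent (pred Q) := by
  refine ⟨pred_le Q, ?_⟩
  intro x hx y hy hxy
  have hxlt : pred Q x < x := pred_lt_of_ne Q hx
  have hylt : pred Q y < y := pred_lt_of_ne Q hy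
  have hpart : Q.part x = Q.part y := by
    rw [← part_pred Q x, ← part_pred Q y, hxy]
  by_contra hne
  rcases lt_or_gt_of_ne hne with h | h
  · have hxmem : x ∈ Q.part y := by
      rw [← hpart]; exact Q.mem_part (mem_univ x)
    have := le_pred Q hxmem h
    rw [← hxy] at this
    exact absurd this (not_le.mpr hxlt)
  · have hymem : y ∈ Q.part x := by
      rw [hpart]; exact Q.mem_part (mem_univ y)
    have := le_pred Q hymem h
    rw [hxy] at this
    exact absurd this (not_le.mpr hylt)

/-- The setoid whose classes are the descent chains of `f`. -/
def rootSetoid (f : Fin n → Fin n) : Setoid (Fin n) :=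
  ⟨fun a b => f^[n] a = f^[n] b, ⟨fun _ => rfl, Eq.symm, Eq.trans⟩⟩

instance (f : Fin n → Fin n) : DecidableRel (rootSetoid f).r :=
  fun _ _ => instDecidableEqFin n _ _

/-- The finpartition given by the descent chains of `f`. -/
def toPart (f : Fin n → Fin n) : Finpartition (univ : Finset (Fin n)) :=
  Finpartition.ofSetoid (rootSetoid f)

lemma mem_part_toPart {f : Fin n → Fin n} {a b : Fin n} :
    b ∈ (toPart f).part a ↔ f^[n] a = f^[n] b :=
  Finpartition.mem_part_ofSetoid_iff_rel

lemma pred_toPart {f : Fin n → Fin n} (hf : IsParent f) : pred (toPart f) = f := by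
  funext i
  rcases eq_or_ne (f i) i with hfix | hfix
  · -- `i` is a root: nothing below it in its part
    have : ¬ (((toPart f).part i).filter (· < i)).Nonempty := by
      rintro ⟨j, hj⟩
      rw [mem_filter, mem_part_toPart] at hj
      exact root_fixed_no_below hf hfix hj.1.symm hj.2
    rw [pred, dif_neg this, hfix]
  · have hlt : f i < i := lt_of_le_of_ne (hf.1 i) hfix
    have hmem : f i ∈ (toPart f).part i := mem_part_toPart.mpr (root_apply hf.1 i).symm
    refine le_antisymm ?_ (le_pred _ hmem hlt)
    -- pred ≤ f i : every element of the part below i is ≤ f i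
    have hmem2 : f i ∈ ((toPart f).part i).filter (· < i) := mem_filter.mpr ⟨hmem, hlt⟩
    rw [pred]
    split_ifs with hne
    · apply Finset.max'_le
      intro y hy
      rw [mem_filter, mem_part_toPart] at hy
      exact le_parent hf hy.1.symm hy.2
    · exact absurd ⟨f i, hmem2⟩ hne

lemma part_iterate_pred (Q : Finpartition (univ : Finset (Fin n))) (i : Fin n) (k : ℕ) :
    Q.part ((pred Q)^[k] i) = Q.part i := by
  induction k with
  | zero => simp
  | succ k ih => rw [Function.iterate_succ_apply', part_pred, ih]

lemma root_eq_iff (Q : Finpartition (univ : Finset (Fin n))) (a b : Fin n) :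
    (pred Q)^[n] a = (pred Q)^[n] b ↔ Q.part a = Q.part b := by
  constructor
  · intro h
    rw [← part_iterate_pred Q a n, h, part_iterate_pred]
  · intro h
    set ra := (pred Q)^[n] a with hra
    set rb := (pred Q)^[n] b with hrb
    have hfa : pred Q ra = ra := iterate_n_fixed (pred_le Q) a
    have hfb : pred Q rb = rb := iterate_n_fixed (pred_le Q) b
    have hpa : Q.part ra = Q.part a := part_iterate_pred Q a n
    have hpb : Q.part rb = Q.part b := part_iterate_pred Q b n
    by_contra hne
    rcases lt_or_gt_of_ne hne with hlt | hlt
    · refine pred_empty_iff Q hfb ?_ hlt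
      have hpp : Q.part ra = Q.part rb := by rw [hpa, h, ← hpb]
      exact (Q.mem_part_iff_part_eq_part (mem_univ ra) (mem_univ rb)).mpr hpp
    · refine pred_empty_iff Q hfa ?_ hlt
      have hpp : Q.part rb = Q.part ra := by rw [hpb, ← h, ← hpa]
      exact (Q.mem_part_iff_part_eq_part (mem_univ rb) (mem_univ ra)).mpr hpp

lemma part_toPart_pred (Q : Finpartition (univ : Finset (Fin n))) (a : Fin n) :
    (toPart (pred Q)).part a = Q.part a := by
  ext b
  rw [mem_part_toPart, root_eq_iff]
  constructor
  · intro h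
    rw [Q.mem_part_iff_part_eq_part (mem_univ b) (mem_univ a), h]
  · intro h
    exact ((Q.mem_part_iff_part_eq_part (mem_univ b) (mem_univ a)).mp h).symm

lemma finpartition_eq_of_part_eq {P Q : Finpartition (univ : Finset (Fin n))}
    (h : ∀ a, P.part a = Q.part a) : P = Q := by
  ext t
  constructor
  · intro ht
    obtain ⟨x, hx⟩ := P.nonempty_of_mem_parts ht
    have : P.part x = t := P.part_eq_of_mem ht hx
    rw [← this, h]
    exact Q.part_mem.2 (mem_univ x)
  · intro ht
    obtain ⟨x, hx⟩ := Q.nonempty_of_mem_parts ht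
    have : Q.part x = t := Q.part_eq_of_mem ht hx
    rw [← this, ← h]
    exact P.part_mem.2 (mem_univ x)

lemma toPart_pred (Q : Finpartition (univ : Finset (Fin n))) : toPart (pred Q) = Q :=
  finpartition_eq_of_part_eq (part_toPart_pred Q)

/-- The equivalence between parent functions and finpartitions. -/
def parentEquiv : {f : Fin n → Fin n // IsParent f} ≃ Finpartition (univ : Finset (Fin n)) where
  toFun f := toPart f.1
  invFun Q := ⟨pred Q, isParent_pred Q⟩
  left_inv f := Subtype.ext (pred_toPart f.2)
  right_inv Q := toPart_pred Q


/-! ### The matrix side -/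

variable {F : Type*} [Field F]

/-- Column index of the unique nonzero entry in row `i` of `[A|B]` built from `f`. -/
def colOf (f : Fin n → Fin n) (i : Fin n) : Fin n ⊕ Fin n :=
  if f i = i then Sum.inl i else Sum.inr (f i)

lemma colOf_injective {f : Fin n → Fin n} (hf : IsParent f) :
    Function.Injective (colOf f) := by
  intro a b hab
  unfold colOf at hab
  by_cases h1 : f a = a <;> by_cases h2 : f b = b
  · rw [if_pos h1, if_pos h2] at hab
    exact Sum.inl.inj hab
  · rw [if_pos h1, if_neg h2] at hab
    exact absurd hab (by simp)
  · rw [if_neg h1, if_pos h2] at hab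
    exact absurd hab (by simp)
  · rw [if_neg h1, if_neg h2] at hab
    exact hf.2 h1 h2 (Sum.inr.inj hab)

/-- The `A` matrix associated to a parent function. -/
def matA (F : Type*) [Field F] (f : Fin n → Fin n) : Matrix (Fin n) (Fin n) F :=
  fun i j => if j = i ∧ f i = i then 1 else 0

/-- The `B` matrix associated to a parent function. -/
def matB (F : Type*) [Field F] (f : Fin n → Fin n) : Matrix (Fin n) (Fin n) F :=
  fun i j => if j = f i ∧ f i ≠ i then 1 else 0

lemma matA_mem_tri (f : Fin n → Fin n) : matA F f ∈ Tri F n := by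
  intro i j hij
  rw [matA, if_neg]
  rintro ⟨rfl, -⟩
  exact lt_irrefl _ hij

lemma matB_mem_tri {f : Fin n → Fin n} (hf : IsParent f) : matB F f ∈ Tri F n := by
  intro i j hij
  rw [matB, if_neg]
  rintro ⟨rfl, -⟩
  exact absurd (hf.1 i) (not_le.mpr hij)

lemma fromColumns_matAB (f : Fin n → Fin n) (i : Fin n) (k : Fin n ⊕ Fin n) :
    Matrix.fromCols (matA F f) (matB F f) i k = if k = colOf f i then 1 else 0 := by
  cases k with
  | inl j =>
    rw [Matrix.fromCols_apply_inl]
    by_cases hfi : f i = i <;> by_cases hj : j = i <;>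
      simp [matA, colOf, hfi, hj]
  | inr j =>
    rw [Matrix.fromCols_apply_inr]
    by_cases hfi : f i = i <;> by_cases hj : j = f i <;>
      simp [matB, colOf, hfi, hj]

lemma rank_matAB {f : Fin n → Fin n} (hf : IsParent f) :
    (Matrix.fromCols (matA F f) (matB F f)).rank = n := by
  set M := Matrix.fromCols (matA F f) (matB F f) with hM
  have hinj : Function.Injective Mᵀ.mulVecLin := by
    rw [← LinearMap.ker_eq_bot, LinearMap.ker_eq_bot']
    intro x hx
    funext i
    have h1 : Mᵀ.mulVecLin x (colOf f i) = 0 := congrFun hx (colOf f i)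
    rw [Matrix.mulVecLin_apply] at h1
    have h2 : (Mᵀ *ᵥ x) (colOf f i) = ∑ j, (if colOf f i = colOf f j then (1:F) else 0) * x j := by
      show (∑ j, Mᵀ (colOf f i) j * x j) = _
      refine Finset.sum_congr rfl (fun j _ => ?_)
      rw [Matrix.transpose_apply, hM, fromColumns_matAB]
    rw [h2, Finset.sum_eq_single i] at h1
    · rw [if_pos rfl, one_mul] at h1
      exact h1
    · intro j _ hji
      rw [if_neg fun hc => hji (colOf_injective hf hc.symm), zero_mul]
    · exact fun h => absurd (Finset.mem_univ i) h
  rw [← Matrix.rank_transpose]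
  show Module.finrank F (LinearMap.range Mᵀ.mulVecLin) = n
  rw [LinearMap.finrank_range_of_inj hinj, Module.finrank_pi, Fintype.card_fin]

lemma rows_lin_indep {M : Matrix (Fin n) (Fin n ⊕ Fin n) F} (hrank : M.rank = n)
    (x : Fin n → F) (hx : ∀ k, ∑ i, M i k * x i = 0) : x = 0 := by
  have ht : Mᵀ.rank = n := by rw [Matrix.rank_transpose]; exact hrank
  have hrange : Module.finrank F (LinearMap.range Mᵀ.mulVecLin) = n := ht
  have hdom : Module.finrank F (Fin n → F) = n := by
    rw [Module.finrank_pi, Fintype.card_fin]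
  have hsum := LinearMap.finrank_range_add_finrank_ker Mᵀ.mulVecLin
  rw [hrange, hdom] at hsum
  have hker : LinearMap.ker Mᵀ.mulVecLin = ⊥ := by
    rw [← Submodule.finrank_eq_zero]
    omega
  have hxk : x ∈ LinearMap.ker Mᵀ.mulVecLin := by
    rw [LinearMap.mem_ker, Matrix.mulVecLin_apply]
    funext k
    show (∑ i, Mᵀ k i * x i) = 0
    rw [← hx k]
    refine Finset.sum_congr rfl (fun i _ => ?_)
    rw [Matrix.transpose_apply]
  rw [hker, Submodule.mem_bot] at hxk
  exact hxk

lemma row_exists_unique {A B : Tri F n} (hcan : IsCanonical A B) (i0 : Fin n) :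
    ∃! k, Matrix.fromCols A.val B.val i0 k ≠ 0 := by
  classical
  set M := Matrix.fromCols A.val B.val with hM
  have hrank : M.rank = n := hcan.2.2.2.2.2
  have hrow : ∀ i : Fin n, ∃ k, M i k ≠ 0 := by
    intro i
    by_contra hc
    push_neg at hc
    have h0 : (Pi.single i (1:F) : Fin n → F) = 0 := by
      apply rows_lin_indep hrank
      intro k
      rw [Finset.sum_eq_single i]
      · rw [hc k, zero_mul]
      · intro j _ hji
        rw [Pi.single_eq_of_ne hji, mul_zero]
      · exact fun h => absurd (Finset.mem_univ i) h
    have : (Pi.single i (1:F) : Fin n → F) i = 0 := by rw [h0]; rfl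
    rw [Pi.single_eq_same] at this
    exact one_ne_zero this
  set S : Finset (Fin n × (Fin n ⊕ Fin n)) := Finset.univ.filter (fun p => M p.1 p.2 ≠ 0)
    with hS
  have hCard : S.card = n := by
    have h1 := hcan.2.2.2.2.1
    have hset : {p : Fin n × (Fin n ⊕ Fin n) |
        Matrix.fromCols A.val B.val p.1 p.2 ≠ 0} = ↑S := by
      ext p
      simp [hS, hM]
    rw [hset, Set.ncard_coe_finset] at h1
    exact h1
  set t : Fin n → Finset (Fin n ⊕ Fin n) := fun i => Finset.univ.filter (fun k => M i k ≠ 0)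
    with ht
  have hfib : S.card = ∑ i, (t i).card := by
    rw [Finset.card_eq_sum_card_fiberwise (f := Prod.fst) (t := Finset.univ)
      (fun p _ => Finset.mem_univ _)]
    refine Finset.sum_congr rfl (fun i _ => ?_)
    refine Finset.card_bij' (fun p _ => p.2) (fun k _ => (i, k)) ?_ ?_ ?_ ?_
    · intro p hp
      rw [Finset.mem_filter] at hp
      obtain ⟨hp1, hp2⟩ := hp
      rw [hS, Finset.mem_filter] at hp1
      rw [ht, Finset.mem_filter]
      exact ⟨Finset.mem_univ _, hp2 ▸ hp1.2⟩
    · intro k hk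
      rw [ht, Finset.mem_filter] at hk
      rw [Finset.mem_filter, hS, Finset.mem_filter]
      exact ⟨⟨Finset.mem_univ _, hk.2⟩, rfl⟩
    · intro p hp
      obtain ⟨a, b⟩ := p
      rw [Finset.mem_filter] at hp
      exact congrArg (fun z => (z, b)) hp.2.symm
    · intro k _
      rfl
  have hpos : ∀ i, 1 ≤ (t i).card := by
    intro i
    obtain ⟨k, hk⟩ := hrow i
    refine Finset.card_pos.mpr ⟨k, ?_⟩
    rw [ht, Finset.mem_filter]
    exact ⟨Finset.mem_univ _, hk⟩
  have hone : (t i0).card = 1 := by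
    by_contra hc
    have h2 : 2 ≤ (t i0).card := by have := hpos i0; omega
    have hlt : (∑ _i : Fin n, 1) < ∑ i, (t i).card :=
      Finset.sum_lt_sum (fun i _ => hpos i) ⟨i0, Finset.mem_univ _, by omega⟩
    simp only [Finset.sum_const, Finset.card_univ, Fintype.card_fin, smul_eq_mul, mul_one] at hlt
    omega
  obtain ⟨k, hk⟩ := Finset.card_eq_one.mp hone
  refine ⟨k, ?_, ?_⟩
  · have hmem : k ∈ t i0 := hk ▸ Finset.mem_singleton_self k
    rw [ht, Finset.mem_filter] at hmem
    exact hmem.2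
  · intro y hy
    have hmem : y ∈ t i0 := by
      rw [ht, Finset.mem_filter]
      exact ⟨Finset.mem_univ _, hy⟩
    rw [hk, Finset.mem_singleton] at hmem
    exact hmem

lemma isCanonical_mat {f : Fin n → Fin n} (hf : IsParent f) :
    IsCanonical (⟨matA F f, matA_mem_tri f⟩ : Tri F n) ⟨matB F f, matB_mem_tri hf⟩ := by
  refine ⟨?_, ?_, ?_, ?_, ?_, rank_matAB hf⟩
  · intro i
    by_cases h : f i = i <;> simp [matA, h]
  · intro i j hji
    by_cases h : j = f i ∧ f i ≠ i
    · right
      show matB F f i j = 1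
      rw [matB, if_pos h]
    · left
      show matB F f i j = 0
      rw [matB, if_neg h]
  · intro i j hji
    show matA F f i j = 0
    rw [matA, if_neg]
    rintro ⟨rfl, -⟩
    exact lt_irrefl _ hji
  · intro i
    show matB F f i i = 0
    rw [matB, if_neg]
    rintro ⟨h1, h2⟩
    exact h2 h1.symm
  · classical
    have hset : {p : Fin n × (Fin n ⊕ Fin n) |
        Matrix.fromCols (matA F f) (matB F f) p.1 p.2 ≠ 0}
        = ↑(Finset.univ.image (fun i : Fin n => (i, colOf f i))) := by
      ext ⟨i, k⟩
      simp only [Set.mem_setOf_eq, Finset.coe_image, Set.mem_image, Finset.mem_coe,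
        Finset.coe_univ, Set.mem_univ, true_and, fromColumns_matAB]
      constructor
      · intro h
        by_cases hk : k = colOf f i
        · exact ⟨i, by rw [hk]⟩
        · rw [if_neg hk] at h
          exact absurd rfl h
      · rintro ⟨a, ha⟩
        have h1 : a = i := congrArg Prod.fst ha
        have h2 : colOf f a = k := congrArg Prod.snd ha
        subst h1
        rw [if_pos h2.symm]
        exact one_ne_zero
    rw [hset, Set.ncard_coe_finset,
      Finset.card_image_of_injective _ (fun a b hab => congrArg Prod.fst hab),
      Finset.card_univ, Fintype.card_fin]

/-- The map from parent functions to canonical pairs. -/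
def toCanonPair (f : {f : Fin n → Fin n // IsParent f}) :
    {p : Tri F n × Tri F n // IsCanonical p.1 p.2} :=
  ⟨(⟨matA F f.1, matA_mem_tri f.1⟩, ⟨matB F f.1, matB_mem_tri f.2⟩), isCanonical_mat f.2⟩

lemma toCanonPair_injective :
    Function.Injective (toCanonPair (F := F) (n := n)) := by
  intro f g h
  have hA : matA F f.1 = matA F g.1 := congrArg (fun p => p.1.1.1) h
  have hB : matB F f.1 = matB F g.1 := congrArg (fun p => p.1.2.1) h
  apply Subtype.ext
  funext i
  by_cases hf : f.1 i = i <;> by_cases hg : g.1 i = i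
  · rw [hf, hg]
  · exfalso
    have h1 : (if i = i ∧ f.1 i = i then (1:F) else 0)
        = (if i = i ∧ g.1 i = i then (1:F) else 0) := congrFun (congrFun hA i) i
    rw [if_pos ⟨rfl, hf⟩, if_neg (fun hc => hg hc.2)] at h1
    exact one_ne_zero h1
  · exfalso
    have h1 : (if i = i ∧ f.1 i = i then (1:F) else 0)
        = (if i = i ∧ g.1 i = i then (1:F) else 0) := congrFun (congrFun hA i) i
    rw [if_neg (fun hc => hf hc.2), if_pos ⟨rfl, hg⟩] at h1
    exact one_ne_zero h1.symm
  · by_cases heq : f.1 i = g.1 i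
    · exact heq
    · exfalso
      have h2 : (if f.1 i = f.1 i ∧ f.1 i ≠ i then (1:F) else 0)
          = (if f.1 i = g.1 i ∧ g.1 i ≠ i then (1:F) else 0) :=
        congrFun (congrFun hB i) (f.1 i)
      rw [if_pos ⟨rfl, hf⟩, if_neg (fun hc => heq hc.1)] at h2
      exact one_ne_zero h2

lemma toCanonPair_surjective :
    Function.Surjective (toCanonPair (F := F) (n := n)) := by
  rintro ⟨⟨A, B⟩, hcan⟩
  classical
  set M := Matrix.fromCols A.val B.val with hM
  have hrank : M.rank = n := hcan.2.2.2.2.2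
  have hEU : ∀ i, ∃! k, M i k ≠ 0 := row_exists_unique hcan
  choose k0 hspec using hEU
  have key1 : ∀ i j : Fin n, k0 i = Sum.inl j → j = i ∧ A.val i i = 1 := by
    intro i j hk
    have hne : M i (Sum.inl j) ≠ 0 := by rw [← hk]; exact (hspec i).1
    rw [hM, Matrix.fromCols_apply_inl] at hne
    have hji : ¬ i < j := fun hc => hne (A.2 i j hc)
    have hij : ¬ j < i := fun hc => hne (hcan.2.2.1 i j hc)
    obtain rfl : j = i := le_antisymm (not_lt.mp hji) (not_lt.mp hij)
    refine ⟨rfl, ?_⟩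
    rcases hcan.1 j with h | h
    · exact absurd h hne
    · exact h
  have key2 : ∀ i j : Fin n, k0 i = Sum.inr j → j < i ∧ B.val i j = 1 := by
    intro i j hk
    have hne : M i (Sum.inr j) ≠ 0 := by rw [← hk]; exact (hspec i).1
    rw [hM, Matrix.fromCols_apply_inr] at hne
    have hij : ¬ i < j := fun hc => hne (B.2 i j hc)
    have hji : j ≠ i := fun hc => hne (hc ▸ hcan.2.2.2.1 i)
    have hlt : j < i := lt_of_le_of_ne (not_lt.mp hij) hji
    refine ⟨hlt, ?_⟩
    rcases hcan.2.1 i j hlt with h | h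
    · exact absurd h hne
    · exact h
  have hcase : ∀ i : Fin n, (k0 i = Sum.inl i ∧ A.val i i = 1) ∨
      (∃ j : Fin n, j < i ∧ k0 i = Sum.inr j ∧ B.val i j = 1) := by
    intro i
    cases hki : k0 i with
    | inl j =>
      obtain ⟨rfl, h⟩ := key1 i j hki
      exact Or.inl ⟨rfl, h⟩
    | inr j =>
      obtain ⟨hlt, h⟩ := key2 i j hki
      exact Or.inr ⟨j, hlt, rfl, h⟩
  set f : Fin n → Fin n := fun i => Sum.elim id id (k0 i) with hf
  have hfle : ∀ i, f i ≤ i := by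
    intro i
    rcases hcase i with ⟨hk, -⟩ | ⟨j, hji, hk, -⟩
    · simp [hf, hk]
    · simp only [hf, hk, Sum.elim_inr, id_eq]
      exact le_of_lt hji
  have hMrow : ∀ i k, M i k = if k = colOf f i then 1 else 0 := by
    intro i k
    rcases hcase i with ⟨hk, hA1⟩ | ⟨j, hji, hk, hB1⟩
    · have hfi : f i = i := by simp [hf, hk]
      have hcol : colOf f i = Sum.inl i := by rw [colOf, if_pos hfi]
      by_cases hkk : k = colOf f i
      · rw [if_pos hkk, hkk, hcol, hM, Matrix.fromCols_apply_inl]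
        exact hA1
      · rw [if_neg hkk]
        by_contra hMk
        exact hkk (by rw [(hspec i).2 k hMk, hk, hcol])
    · have hfi : f i = j := by simp [hf, hk]
      have hfne : f i ≠ i := by rw [hfi]; exact ne_of_lt hji
      have hcol : colOf f i = Sum.inr j := by rw [colOf, if_neg hfne, hfi]
      by_cases hkk : k = colOf f i
      · rw [if_pos hkk, hkk, hcol, hM, Matrix.fromCols_apply_inr]
        exact hB1
      · rw [if_neg hkk]
        by_contra hMk
        exact hkk (by rw [(hspec i).2 k hMk, hk, hcol])
  have hinj : Set.InjOn f {i | f i ≠ i} := by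
    intro a ha b hb hab
    by_contra hne
    have hcols : colOf f a = colOf f b := by
      rw [colOf, if_neg ha, colOf, if_neg hb, hab]
    have hz0 : (fun i => (if i = a then (1:F) else 0) - (if i = b then 1 else 0)) = 0 := by
      apply rows_lin_indep hrank
      intro k
      have hsplit : ∀ i : Fin n,
          M i k * ((if i = a then (1:F) else 0) - (if i = b then 1 else 0))
          = M i k * (if i = a then (1:F) else 0) - M i k * (if i = b then (1:F) else 0) := by
        intro i
        rw [mul_sub]
      rw [Finset.sum_congr rfl (fun i _ => hsplit i), Finset.sum_sub_distrib]
      have ha' : ∑ i, M i k * (if i = a then (1:F) else 0) = M a k := by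
        rw [Finset.sum_eq_single a]
        · rw [if_pos rfl, mul_one]
        · intro j _ hj
          rw [if_neg hj, mul_zero]
        · exact fun h => absurd (Finset.mem_univ a) h
      have hb' : ∑ i, M i k * (if i = b then (1:F) else 0) = M b k := by
        rw [Finset.sum_eq_single b]
        · rw [if_pos rfl, mul_one]
        · intro j _ hj
          rw [if_neg hj, mul_zero]
        · exact fun h => absurd (Finset.mem_univ b) h
      rw [ha', hb', hMrow a k, hMrow b k, hcols, sub_self]
    have hz1 : (if a = a then (1:F) else 0) - (if a = b then 1 else 0) = 0 := congrFun hz0 a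
    rw [if_pos rfl, if_neg hne, sub_zero] at hz1
    exact one_ne_zero hz1
  refine ⟨⟨f, hfle, hinj⟩, ?_⟩
  apply Subtype.ext
  show ((⟨matA F f, matA_mem_tri f⟩ : Tri F n), (⟨matB F f, matB_mem_tri ⟨hfle, hinj⟩⟩ : Tri F n))
      = (A, B)
  rw [Prod.mk.injEq]
  constructor
  · apply Subtype.ext
    funext i j
    have e1 : matA F f i j = if Sum.inl j = colOf f i then (1:F) else 0 := by
      rw [← Matrix.fromCols_apply_inl (matA F f) (matB F f), fromColumns_matAB]
    have e2 := hMrow i (Sum.inl j)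
    rw [hM, Matrix.fromCols_apply_inl] at e2
    show matA F f i j = A.val i j
    rw [e1, e2]
  · apply Subtype.ext
    funext i j
    have e1 : matB F f i j = if Sum.inr j = colOf f i then (1:F) else 0 := by
      rw [← Matrix.fromCols_apply_inr (matA F f) (matB F f), fromColumns_matAB]
    have e2 := hMrow i (Sum.inr j)
    rw [hM, Matrix.fromCols_apply_inr] at e2
    show matB F f i j = B.val i j
    rw [e1, e2]

/-- The equivalence between parent functions and canonical pairs. -/
noncomputable def canonEquiv (F : Type*) [Field F] (n : ℕ) :
    {f : Fin n → Fin n // IsParent f} ≃ {p : Tri F n × Tri F n // IsCanonical p.1 p.2} :=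
  Equiv.ofBijective toCanonPair ⟨toCanonPair_injective, toCanonPair_surjective⟩

end CanonicalPairsAux


/-- The set of canonical pairs `(A,B) ∈ ²T_n` (`n ≥ 2`) is in bijection
with the set of partitions of `{1, …, n}`; in particular the number of canonical pairs
equals the Bell number `B_n`, the number of partitions of an `n`-element set. -/
theorem canonical_pairs_equiv_partitions
    {F : Type*} [Field F] {n : ℕ} (hn : 2 ≤ n) :
    Nonempty ({p : Tri F n × Tri F n // IsCanonical p.1 p.2} ≃
        Finpartition (Finset.univ : Finset (Fin n))) ∧
      Nat.card {p : Tri F n × Tri F n // IsCanonical p.1 p.2} =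
        Nat.card (Finpartition (Finset.univ : Finset (Fin n))) := by
  have e : {p : Tri F n × Tri F n // IsCanonical p.1 p.2} ≃
      Finpartition (Finset.univ : Finset (Fin n)) :=
    (CanonicalPairsAux.canonEquiv F n).symm.trans CanonicalPairsAux.parentEquiv
  exact ⟨⟨e⟩, Nat.card_congr e⟩
end

section
/- Let F be a field, n ≥ 2, and T_n the ring of lower triangular n×n matrices over F. If a pair (A,B) ∈ ²T_n generates a free cyclic submodule T_n(A,B), then (A,B) is either unimodular or an outlier; that is, every free cyclic submodule of ²T_n is generated by a unimodular pair or by an outlier. -/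
/-- If a pair `(A,B) ∈ ²T_n` (`n ≥ 2`) generates a free cyclic
submodule `T_n(A,B)`, then `(A,B)` is either unimodular or an outlier; that is, every
free cyclic submodule of `²T_n` is generated by a unimodular pair or by an outlier. -/
theorem free_pair_unimodular_or_outlier
    {F : Type*} [Field F] {n : ℕ} (hn : 2 ≤ n) (A B : Tri F n)
    (hfree : ∀ R : Tri F n, R * A = 0 → R * B = 0 → R = 0) :
    Unimodular A B ∨ Outlier A B := by
  by_cases hout : Outlier A B
  · exact Or.inr hout
  left
  rw [Outlier, not_not] at hout
  obtain ⟨C, D, ⟨X, Y, hU⟩, R, hR⟩ := hout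
  have hA : A = R * C := congrArg Prod.fst hR
  have hB : B = R * D := congrArg Prod.snd hR
  -- R has trivial left annihilator in Tri
  have hann : ∀ S : Tri F n, S * R = 0 → S = 0 := by
    intro S hS
    refine hfree S ?_ ?_
    · rw [hA, ← mul_assoc, hS, zero_mul]
    · rw [hB, ← mul_assoc, hS, zero_mul]
  -- R is invertible as a matrix
  have hdet : (R : Matrix (Fin n) (Fin n) F).det ≠ 0 := by
    intro hd
    obtain ⟨v, hv, hvR⟩ := Matrix.exists_vecMul_eq_zero_iff.mpr hd
    set i0 : Fin n := ⟨n - 1, Nat.sub_lt (by omega) one_pos⟩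
    set Smat : Matrix (Fin n) (Fin n) F := fun i j => if i = i0 then v j else 0 with hSdef
    have hStri : Smat ∈ Tri F n := by
      intro i j hij
      simp only [hSdef]
      split
      · next h =>
        exfalso
        have : (j : ℕ) < n := j.isLt
        have : (i : ℕ) = n - 1 := congrArg Fin.val h
        omega
      · rfl
    have hSR : (⟨Smat, hStri⟩ : Tri F n) * R = 0 := by
      apply Subtype.ext
      show Smat * (R : Matrix (Fin n) (Fin n) F) = 0
      ext i j
      rw [Matrix.mul_apply]
      simp only [hSdef, Matrix.zero_apply]
      by_cases hi : i = i0
      · simp only [hi, if_pos rfl]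
        have := congrFun hvR j
        simpa [Matrix.vecMul, dotProduct] using this
      · simp [hi]
    have := hann _ hSR
    apply hv
    funext j
    have := congrFun (congrFun (congrArg Subtype.val this) i0) j
    simpa [hSdef] using this
  have hdu : IsUnit (R : Matrix (Fin n) (Fin n) F).det := isUnit_iff_ne_zero.mpr hdet
  haveI : Invertible (R : Matrix (Fin n) (Fin n) F) := (R : Matrix (Fin n) (Fin n) F).invertibleOfIsUnitDet hdu
  -- R⁻¹ is lower triangular
  have hRtri : Matrix.BlockTriangular (R : Matrix (Fin n) (Fin n) F) (OrderDual.toDual : Fin n → (Fin n)ᵒᵈ) := by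
    intro i j hij
    exact R.2 i j hij
  have hinvtri : (R : Matrix (Fin n) (Fin n) F)⁻¹ ∈ Tri F n := by
    intro i j hij
    exact Matrix.blockTriangular_inv_of_blockTriangular hRtri
      (show (OrderDual.toDual : Fin n → (Fin n)ᵒᵈ) j < OrderDual.toDual i from hij)
  set Rinv : Tri F n := ⟨(R : Matrix (Fin n) (Fin n) F)⁻¹, hinvtri⟩
  have hRunit : IsUnit R := by
    refine ⟨⟨R, Rinv, ?_, ?_⟩, rfl⟩
    · exact Subtype.ext (Matrix.mul_nonsing_inv _ hdu)
    · exact Subtype.ext (Matrix.nonsing_inv_mul _ hdu)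
  exact ⟨X, Y, by rw [hA, hB, mul_assoc, mul_assoc, ← mul_add]; exact hRunit.mul hU⟩
end
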